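/- Let A ∈ 𝔰𝔭(ℝ⁶) with A ≠ 0. The following are equivalent: (1) there exists c ∈ ℝ such that Q_A − c·I₇ is a derivation of 𝔤_A (i.e. the associated coclosed G₂-structure is an algebraic soliton of the Laplacian coflow); (2) [ [A,Aᵗ] + S_A ∘₆ S_A , A ] = ( ( |[A,Aᵗ]|² + ⟨S_A ∘₆ S_A, [A,Aᵗ]⟩ ) / |A|² )·A. Moreover, in this case the constant is c = −½( tr(S_A²) + ½(tr JA)² + |[A,Aᵗ]|²/|A|² + ⟨S_A ∘₆ S_A, [A,Aᵗ]⟩/|A|² ). -/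

import Mathlib

open Matrix BigOperators

noncomputable section

abbrev M6 : Type := Matrix (Fin 6) (Fin 6) ℝ
abbrev M7 : Type := Matrix (Fin 7) (Fin 7) ℝ

/-- The canonical almost complex structure `J` on `ℝ⁶`:
`Je₁ = e₂, Je₂ = −e₁, Je₃ = e₄, Je₄ = −e₃, Je₅ = e₆, Je₆ = −e₅` (0-based indices). -/
def J6 : M6 := Matrix.of fun i j =>
  if (i = 1 ∧ j = 0) ∨ (i = 3 ∧ j = 2) ∨ (i = 5 ∧ j = 4) then 1
  else if (i = 0 ∧ j = 1) ∨ (i = 2 ∧ j = 3) ∨ (i = 4 ∧ j = 5) then -1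
  else 0

/-- `A ∈ 𝔰𝔭(ℝ⁶)` iff `AJ + JAᵗ = 0`. -/
def inSp (A : M6) : Prop := A * J6 + J6 * Aᵀ = 0

/-- The symmetric part `S_A = ½(A + Aᵗ)`. -/
def symPart (A : M6) : M6 := (1/2 : ℝ) • (A + Aᵀ)

/-- Frobenius inner product `⟨X,Y⟩ = tr(XYᵗ)`. -/
def mdot {n : ℕ} (X Y : Matrix (Fin n) (Fin n) ℝ) : ℝ := (X * Yᵀ).trace

/-- Commutator `[X,Y] = XY − YX`. -/
def mcomm {n : ℕ} (X Y : Matrix (Fin n) (Fin n) ℝ) : Matrix (Fin n) (Fin n) ℝ := X * Y - Y * X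

/-- Kronecker delta. -/
def kdelta {n : ℕ} (x y : Fin n) : ℝ := if x = y then 1 else 0

/-- The totally antisymmetric 3-tensor `e^a ∧ e^b ∧ e^c` evaluated on `(e_i, e_j, e_k)`. -/
def alt3 {n : ℕ} (a b c i j k : Fin n) : ℝ :=
  Matrix.det !![kdelta a i, kdelta a j, kdelta a k;
                kdelta b i, kdelta b j, kdelta b k;
                kdelta c i, kdelta c j, kdelta c k]

/-- `ρ⁺ = e¹³⁵ − e¹⁴⁶ − e²⁴⁵ − e²³⁶` (here written with 0-based indices). -/
def rhoP (i j k : Fin 6) : ℝ :=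
  alt3 0 2 4 i j k - alt3 0 3 5 i j k - alt3 1 3 4 i j k - alt3 1 2 5 i j k

/-- `(h ∘₆ k)_{ab} = Σ_{m,n,p,q} h_{mn} k_{pq} ρ⁺_{mpa} ρ⁺_{nqb}`. -/
def circ6 (h k : M6) : M6 :=
  Matrix.of fun a b => ∑ m, ∑ n, ∑ p, ∑ q, h m n * k p q * rhoP m p a * rhoP n q b

/-- Embed a 6×6 block and a scalar as a block-diagonal 7×7 matrix `diag(M, x)`. -/
def blockDiag7 (M : M6) (x : ℝ) : M7 :=
  Matrix.of fun i j =>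
    if hi : (i : ℕ) < 6 then
      (if hj : (j : ℕ) < 6 then M ⟨i, hi⟩ ⟨j, hj⟩ else 0)
    else (if (j : ℕ) < 6 then 0 else x)

/-- The Lie bracket of the almost Abelian Lie algebra `𝔤_A = ℝ⁶ ⊕ ℝe₇`:
`[e₇, v] = Av` for `v ∈ ℝ⁶` and `[v, w] = 0` for `v, w ∈ ℝ⁶`. -/
def bracket7 (A : M6) (x y : Fin 7 → ℝ) : Fin 7 → ℝ :=
  x 6 • (blockDiag7 A 0).mulVec y - y 6 • (blockDiag7 A 0).mulVec x

/-- `D ∈ gl(ℝ⁷)` is a derivation of `𝔤_A`. -/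
def IsDerivation7 (A : M6) (D : M7) : Prop :=
  ∀ x y : Fin 7 → ℝ,
    D.mulVec (bracket7 A x y) = bracket7 A (D.mulVec x) y + bracket7 A x (D.mulVec y)

/-- `Q_A = diag(½[A,Aᵗ] + ½ S_A ∘₆ S_A , −½tr(S_A²) − ¼(tr JA)²)`, the matrix with
`Δ_A ψ = θ(Q_A)ψ`. -/
def QA (A : M6) : M7 :=
  blockDiag7 ((1/2 : ℝ) • mcomm A Aᵀ + (1/2 : ℝ) • circ6 (symPart A) (symPart A))
    (-(1/2) * (symPart A * symPart A).trace - (1/4) * ((J6 * A).trace)^2)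

/-- embedding ℝ⁶ → ℝ⁷ -/
def emb (v : Fin 6 → ℝ) : Fin 7 → ℝ := fun i => if h : (i : ℕ) < 6 then v ⟨i, h⟩ else 0

def e7v : Fin 7 → ℝ := fun i => if (i : ℕ) = 6 then 1 else 0

def proj6 (x : Fin 7 → ℝ) : Fin 6 → ℝ := fun j => x ⟨(j : ℕ), by omega⟩

@[simp] lemma emb_six (v : Fin 6 → ℝ) : emb v 6 = 0 := rfl
@[simp] lemma e7v_six : e7v 6 = 1 := rfl
@[simp] lemma proj6_emb (v : Fin 6 → ℝ) : proj6 (emb v) = v := by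
  funext j; simp [proj6, emb]
@[simp] lemma proj6_e7v : proj6 e7v = 0 := by
  funext j; simp only [proj6, e7v, Fin.val_mk]
  have : (j : ℕ) ≠ 6 := by omega
  simp [this]
@[simp] lemma emb_add (u v : Fin 6 → ℝ) : emb (u + v) = emb u + emb v := by
  funext i; simp only [emb, Pi.add_apply]; split <;> simp
@[simp] lemma emb_sub (u v : Fin 6 → ℝ) : emb (u - v) = emb u - emb v := by
  funext i; simp only [emb, Pi.sub_apply]; split <;> simp
@[simp] lemma emb_smul (c : ℝ) (v : Fin 6 → ℝ) : emb (c • v) = c • emb v := by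
  funext i; simp only [emb, Pi.smul_apply]; split <;> simp
@[simp] lemma emb_zero : emb 0 = 0 := by
  funext i; simp only [emb, Pi.zero_apply]; split <;> simp

@[simp] lemma proj6_add (x y : Fin 7 → ℝ) : proj6 (x + y) = proj6 x + proj6 y := rfl
@[simp] lemma proj6_smul (c : ℝ) (x : Fin 7 → ℝ) : proj6 (c • x) = c • proj6 x := rfl

lemma emb_inj {u v : Fin 6 → ℝ} (h : emb u = emb v) : u = v := by
  have := congrArg proj6 h; simpa using this

lemma mulVec_blockDiag7 (M : M6) (d : ℝ) (x : Fin 7 → ℝ) :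
    (blockDiag7 M d).mulVec x = emb (M.mulVec (proj6 x)) + (d * x 6) • e7v := by
  funext i
  fin_cases i <;>
    simp (config := { decide := true }) [Matrix.mulVec, dotProduct, Fin.sum_univ_seven,
      Fin.sum_univ_six, blockDiag7, emb, e7v, proj6, Fin.isValue] <;> rfl
lemma bracket7_eq (A : M6) (x y : Fin 7 → ℝ) :
    bracket7 A x y = emb (x 6 • A.mulVec (proj6 y) - y 6 • A.mulVec (proj6 x)) := by
  have h0 : ∀ z : Fin 7 → ℝ, (blockDiag7 A 0).mulVec z = emb (A.mulVec (proj6 z)) := by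
    intro z; rw [mulVec_blockDiag7]; simp
  simp [bracket7, h0]

lemma isDeriv_iff (A M : M6) (d : ℝ) :
    IsDerivation7 A (blockDiag7 M d) ↔ M * A - A * M = d • A := by
  constructor
  · intro h
    have key : ∀ v : Fin 6 → ℝ,
        (M * A).mulVec v = d • A.mulVec v + (A * M).mulVec v := by
      intro v
      have := h e7v (emb v)
      rw [bracket7_eq, bracket7_eq, bracket7_eq] at this
      simp only [mulVec_blockDiag7, proj6_emb, proj6_e7v, emb_six, e7v_six,
        Matrix.mulVec_zero, emb_zero, zero_add, mul_one, mul_zero, zero_smul, add_zero,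
        one_smul, smul_zero, sub_zero, zero_sub] at this
      simp only [Pi.smul_apply, e7v_six, smul_eq_mul, mul_one, Matrix.mulVec_mulVec] at this
      rw [← emb_add] at this
      exact emb_inj this
    ext i j
    have h4 := congrFun (key (Pi.single j 1)) i
    simp only [Matrix.mulVec_single_one, Matrix.col_apply, mul_one, Pi.add_apply, Pi.smul_apply, smul_eq_mul] at h4
    simp only [Matrix.sub_apply, Matrix.smul_apply, smul_eq_mul]
    rw [h4]; ring
  · intro h x y
    have hv : ∀ w : Fin 6 → ℝ,
        M.mulVec (A.mulVec w) = A.mulVec (M.mulVec w) + d • A.mulVec w := by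
      intro w
      have h' : M * A = A * M + d • A := by rw [← h]; abel
      rw [Matrix.mulVec_mulVec, h', Matrix.add_mulVec, Matrix.smul_mulVec,
        Matrix.mulVec_mulVec]
    rw [bracket7_eq, bracket7_eq, bracket7_eq, mulVec_blockDiag7, mulVec_blockDiag7,
      mulVec_blockDiag7]
    simp only [proj6_emb, emb_six, mul_zero, zero_smul, add_zero, Pi.add_apply,
      Pi.smul_apply, e7v_six, mul_one, proj6_e7v, Matrix.mulVec_zero]
    rw [Matrix.mulVec_sub, Matrix.mulVec_smul, Matrix.mulVec_smul, hv, hv, ← emb_add]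
    simp only [proj6_add, proj6_smul, proj6_emb, proj6_e7v, smul_zero, add_zero, zero_add,
      smul_eq_mul, mul_one]
    exact congrArg emb (by module)
lemma blockDiag7_sub_smul_one (M : M6) (x c : ℝ) :
    blockDiag7 M x - c • (1 : M7) = blockDiag7 (M - c • (1 : M6)) (x - c) := by
  ext i j
  by_cases hi : (i : ℕ) < 6 <;> by_cases hj : (j : ℕ) < 6 <;>
    simp only [Matrix.sub_apply, Matrix.smul_apply, Matrix.one_apply, blockDiag7,
      Matrix.of_apply, hi, hj, dif_pos, dif_neg, if_pos, if_neg, not_false_iff, smul_eq_mul]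
  · have : (i = j) ↔ ((⟨(i:ℕ), hi⟩ : Fin 6) = ⟨(j:ℕ), hj⟩) := by
      constructor <;> intro h <;> [skip; skip] <;>
        · apply Fin.ext
          simpa [Fin.ext_iff] using h
    by_cases hij : i = j
    · simp [hij, this.mp hij]
    · have : ¬ ((⟨(i:ℕ), hi⟩ : Fin 6) = ⟨(j:ℕ), hj⟩) := fun h => hij (by
        apply Fin.ext; simpa [Fin.ext_iff] using h)
      simp [hij, this]
  · have : i ≠ j := fun h => hj (h ▸ hi)
    simp [this]
  · have : i ≠ j := fun h => hi (h ▸ hj)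
    simp [this]
  · have : i = j := by
      apply Fin.ext
      omega
    simp [this]

lemma trace_comm_mul (C A : M6) :
    ((C * A - A * C) * Aᵀ).trace = (C * (A * Aᵀ - Aᵀ * A)).trace := by
  rw [Matrix.sub_mul, Matrix.trace_sub, Matrix.mul_sub, Matrix.trace_sub]
  congr 1
  · rw [Matrix.mul_assoc]
  · rw [Matrix.trace_mul_cycle, Matrix.trace_mul_cycle, ← Matrix.mul_assoc]

lemma mdot_self_ne_zero {A : M6} (hA0 : A ≠ 0) : mdot A A ≠ 0 := by
  have hexp : mdot A A = ∑ i, ∑ j, A i j * A i j := by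
    simp [mdot, Matrix.trace, Matrix.diag, Matrix.mul_apply, Matrix.transpose_apply]
  intro h
  apply hA0
  ext i j
  have h1 : ∀ i ∈ (Finset.univ : Finset (Fin 6)), (0:ℝ) ≤ ∑ j, A i j * A i j :=
    fun i _ => Finset.sum_nonneg fun j _ => mul_self_nonneg _
  have h2 := (Finset.sum_eq_zero_iff_of_nonneg h1).mp (hexp ▸ h) i (Finset.mem_univ i)
  have h3 := (Finset.sum_eq_zero_iff_of_nonneg
    (fun j _ => mul_self_nonneg (A i j))).mp h2 j (Finset.mem_univ j)
  simpa [mul_self_eq_zero] using h3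
/-- `(𝔤_A, φ)` is an algebraic soliton of the Laplacian coflow (i.e. `Q_A − c·I₇` is a
derivation of `𝔤_A` for some `c`) iff
`[[A,Aᵗ] + S_A ∘₆ S_A, A] = ((|[A,Aᵗ]|² + ⟨S_A ∘₆ S_A, [A,Aᵗ]⟩)/|A|²)·A`;
in this case the constant is
`c = −½(tr(S_A²) + ½(tr JA)² + |[A,Aᵗ]|²/|A|² + ⟨S_A ∘₆ S_A,[A,Aᵗ]⟩/|A|²)`. -/
theorem algebraic_soliton_iff (A : M6) (hA : inSp A) (hA0 : A ≠ 0) :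
    ((∃ c : ℝ, IsDerivation7 A (QA A - c • (1 : M7))) ↔
      mcomm (mcomm A Aᵀ + circ6 (symPart A) (symPart A)) A =
        ((mdot (mcomm A Aᵀ) (mcomm A Aᵀ)
            + mdot (circ6 (symPart A) (symPart A)) (mcomm A Aᵀ)) / mdot A A) • A) ∧
    (mcomm (mcomm A Aᵀ + circ6 (symPart A) (symPart A)) A =
        ((mdot (mcomm A Aᵀ) (mcomm A Aᵀ)
            + mdot (circ6 (symPart A) (symPart A)) (mcomm A Aᵀ)) / mdot A A) • A →
      IsDerivation7 A (QA A -
        (-(1/2) * ((symPart A * symPart A).trace + (1/2) * ((J6 * A).trace)^2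
          + mdot (mcomm A Aᵀ) (mcomm A Aᵀ) / mdot A A
          + mdot (circ6 (symPart A) (symPart A)) (mcomm A Aᵀ) / mdot A A)) • (1 : M7))) := by
  set S := symPart A with hS
  set B := mcomm A Aᵀ with hB
  set T := circ6 S S with hT
  set q : ℝ := -(1/2) * (S * S).trace - (1/4) * ((J6 * A).trace)^2 with hq
  have hBt : Bᵀ = B := by
    rw [hB]; simp [mcomm, Matrix.transpose_sub, Matrix.transpose_mul,
      Matrix.transpose_transpose]
  have hAA : mdot A A ≠ 0 := mdot_self_ne_zero hA0
  have htr : mdot (mcomm (B + T) A) A = mdot B B + mdot T B := by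
    have h1 : mdot (mcomm (B + T) A) A = ((B + T) * (A * Aᵀ - Aᵀ * A)).trace :=
      trace_comm_mul (B + T) A
    have h2 : A * Aᵀ - Aᵀ * A = B := by rw [hB]; rfl
    rw [h1, h2, Matrix.add_mul, Matrix.trace_add, mdot, mdot, hBt]
  have key : ∀ c : ℝ, IsDerivation7 A (QA A - c • (1 : M7)) ↔
      mcomm (B + T) A = (2 * (q - c)) • A := by
    intro c
    have hQ : QA A - c • (1 : M7) =
        blockDiag7 ((1/2 : ℝ) • B + (1/2 : ℝ) • T - c • 1) (q - c) := by
      rw [hB, hT, hS, hq]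
      simp only [QA]
      rw [blockDiag7_sub_smul_one]
    rw [hQ, isDeriv_iff]
    have hcomm : ((1/2 : ℝ) • B + (1/2 : ℝ) • T - c • 1) * A
        - A * ((1/2 : ℝ) • B + (1/2 : ℝ) • T - c • 1)
        = (1/2 : ℝ) • (mcomm (B + T) A) := by
      simp only [mcomm, Matrix.sub_mul, Matrix.mul_sub, Matrix.add_mul, Matrix.mul_add,
        Matrix.smul_mul, Matrix.mul_smul, Matrix.one_mul, Matrix.mul_one]
      module
    have half : ((q - c) • A : M6) = (1/2 : ℝ) • ((2 * (q - c)) • A) := by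
      rw [smul_smul]; ring_nf
    rw [hcomm, half]
    exact ⟨fun h => smul_right_injective _ (by norm_num : (1/2 : ℝ) ≠ 0) h,
      fun h => by rw [h]⟩
  constructor
  · constructor
    · rintro ⟨c, hc⟩
      have h := (key c).mp hc
      have h5 : mdot B B + mdot T B = (2 * (q - c)) * mdot A A := by
        rw [← htr, h]
        simp [mdot, Matrix.smul_mul, Matrix.trace_smul, smul_eq_mul]
      have h6 : (2 * (q - c)) = (mdot B B + mdot T B) / mdot A A := by
        rw [h5]; field_simp
      rw [h, h6]
    · intro h
      refine ⟨q - (mdot B B + mdot T B) / (2 * mdot A A), (key _).mpr ?_⟩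
      rw [h]; congr 1; field_simp; ring
  · intro h
    apply (key _).mpr
    rw [h]; congr 1
    rw [hq]; field_simp; ring
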